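/- If (x, z, ζ) is a fixed point of the ADMM iteration x ← (A+ρI)⁻¹(b+ρ(z−ζ)), z ← median(l, u, (μv+ρ(x+ζ))/(μ+ρ)), ζ ← ζ + x − z (with updates applied in order), then x = z and z is the unique minimizer of (1/2)xᵀAx − bᵀx + (μ/2)‖x − v‖² over the box [l,u]. -/

import Mathlib

open Matrix Finset

private lemma clamp_mul_nonpos (l u p y : ℝ) (hlu : l ≤ u) (hy1 : l ≤ y) (hy2 : y ≤ u) :
    (p - max l (min u p)) * (y - max l (min u p)) ≤ 0 := by
  rcases le_total p l with h | h
  · rw [min_eq_right (h.trans hlu), max_eq_left h]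
    exact mul_nonpos_of_nonpos_of_nonneg (by linarith) (by linarith)
  · rcases le_total u p with h2 | h2
    · rw [min_eq_left h2, max_eq_right hlu]
      exact mul_nonpos_of_nonneg_of_nonpos (by linarith) (by linarith)
    · rw [min_eq_right h2, max_eq_right h]
      simp

private lemma norm_sq_eq' (D : ℕ) (w : EuclideanSpace ℝ (Fin D)) :
    ‖w‖ ^ 2 = ∑ i, (w i) ^ 2 := by
  rw [EuclideanSpace.norm_eq, Real.sq_sqrt (by positivity)]
  simp_rw [Real.norm_eq_abs, sq_abs]

/-- If (x, z, ζ) is a fixed point of the ADMM iteration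
x ← (A+ρI)⁻¹(b+ρ(z−ζ)), z ← median(l, u, (μv+ρ(x+ζ))/(μ+ρ)), ζ ← ζ + x − z,
then x = z and z is the unique minimizer of (1/2)xᵀAx − bᵀx + (μ/2)‖x − v‖² over [l,u]. -/
theorem stmt_6 (D : ℕ) (A : Matrix (Fin D) (Fin D) ℝ) (b v l u : EuclideanSpace ℝ (Fin D))
    (μ ρ : ℝ) (hA : A.IsSymm) (hApsd : A.PosSemidef) (hμ : 0 < μ) (hρ : 0 < ρ)
    (hlu : ∀ i, l i ≤ u i)
    (x z ζ : EuclideanSpace ℝ (Fin D))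
    (hx : x = (A + ρ • (1 : Matrix (Fin D) (Fin D) ℝ))⁻¹.mulVec (b + ρ • (z - ζ)))
    (hz : ∀ i, z i = max (l i) (min (u i) ((μ * v i + ρ * (x i + ζ i)) / (μ + ρ))))
    (hζ : ζ = ζ + x - z) :
    x = z ∧
    (∀ i, l i ≤ z i ∧ z i ≤ u i) ∧
    (∀ y : EuclideanSpace ℝ (Fin D), (∀ i, l i ≤ y i ∧ y i ≤ u i) →
      (1/2) * (z ⬝ᵥ A.mulVec z) - b ⬝ᵥ z + (μ/2) * ‖z - v‖^2 ≤
      (1/2) * (y ⬝ᵥ A.mulVec y) - b ⬝ᵥ y + (μ/2) * ‖y - v‖^2) ∧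
    (∀ w : EuclideanSpace ℝ (Fin D), (∀ i, l i ≤ w i ∧ w i ≤ u i) →
      (∀ y : EuclideanSpace ℝ (Fin D), (∀ i, l i ≤ y i ∧ y i ≤ u i) →
        (1/2) * (w ⬝ᵥ A.mulVec w) - b ⬝ᵥ w + (μ/2) * ‖w - v‖^2 ≤
        (1/2) * (y ⬝ᵥ A.mulVec y) - b ⬝ᵥ y + (μ/2) * ‖y - v‖^2) → w = z) := by
  have hμρ : (0:ℝ) < μ + ρ := by linarith
  -- x = z
  have hxz : x = z := by
    have h : x - z = 0 := by
      rw [add_sub_assoc] at hζ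
      exact left_eq_add.mp hζ
    exact sub_eq_zero.mp h
  -- the matrix A + ρ I is positive definite, hence invertible
  have hM : (A + ρ • (1 : Matrix (Fin D) (Fin D) ℝ)).PosDef := by
    refine Matrix.PosDef.posSemidef_add hApsd ?_
    rw [smul_one_eq_diagonal]
    exact .diagonal fun _ => hρ
  have hdet : IsUnit (A + ρ • (1 : Matrix (Fin D) (Fin D) ℝ)).det :=
    hM.det_pos.ne'.isUnit
  have hMx : (A + ρ • (1 : Matrix (Fin D) (Fin D) ℝ)) *ᵥ x = b + ρ • (z - ζ) := by
    rw [hx, Matrix.mulVec_mulVec, Matrix.mul_nonsing_inv _ hdet, Matrix.one_mulVec]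
  -- componentwise stationarity: ρ ζ = b - A z
  have hζ' : ∀ i, ρ * ζ i = b i - (A *ᵥ z) i := by
    intro i
    have h := congrFun hMx i
    have hxi : x = (z : Fin D → ℝ) := by rw [hxz]
    rw [hxi] at h
    simp only [Matrix.add_mulVec, Matrix.smul_mulVec, Matrix.one_mulVec,
      Pi.add_apply, Pi.sub_apply, Pi.smul_apply, PiLp.add_apply, PiLp.smul_apply, PiLp.sub_apply,
      smul_eq_mul] at h
    linarith
  -- box membership
  have hbox : ∀ i, l i ≤ z i ∧ z i ≤ u i := by
    intro i
    rw [hz i]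
    exact ⟨le_max_left _ _, max_le (hlu i) (min_le_left _ _)⟩
  -- the gradient direction inequality
  set g : Fin D → ℝ := fun i => (A *ᵥ z) i - b i + μ * (z i - v i) with hgdef
  have hg : ∀ y : EuclideanSpace ℝ (Fin D), (∀ i, l i ≤ y i ∧ y i ≤ u i) →
      ∀ i, 0 ≤ g i * (y i - z i) := by
    intro y hy i
    set p : ℝ := (μ * v i + ρ * (x i + ζ i)) / (μ + ρ) with hpdef
    have hc : (p - z i) * (y i - z i) ≤ 0 := by
      rw [hz i]
      exact clamp_mul_nonpos _ _ _ _ (hlu i) (hy i).1 (hy i).2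
    have hxi : x i = z i := by rw [hxz]
    have hkey : (μ + ρ) * (p - z i) = -(g i) := by
      have h1 := hζ' i
      rw [hpdef, hgdef]
      field_simp
      ring_nf
      nlinarith [h1]
    have h2 : (μ + ρ) * ((p - z i) * (y i - z i)) ≤ 0 :=
      mul_nonpos_of_nonneg_of_nonpos hμρ.le hc
    have h3 : g i * (y i - z i) = -((μ + ρ) * ((p - z i) * (y i - z i))) := by
      linear_combination (y i - z i) * hkey
    rw [h3]
    linarith
  -- quadratic expansion of the objective
  have hexp : ∀ y : EuclideanSpace ℝ (Fin D),
      (1/2) * (y ⬝ᵥ A.mulVec y) - b ⬝ᵥ y + (μ/2) * ‖y - v‖^2 =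
      ((1/2) * (z ⬝ᵥ A.mulVec z) - b ⬝ᵥ z + (μ/2) * ‖z - v‖^2)
        + (∑ i, g i * (y i - z i))
        + (1/2) * ((fun i => y i - z i) ⬝ᵥ A *ᵥ (fun i => y i - z i))
        + (μ/2) * ∑ i, (y i - z i)^2 := by
    intro y
    set d : Fin D → ℝ := fun i => y i - z i with hddef
    have hy : (y : Fin D → ℝ) = (fun i => z i + d i) := by
      funext i; simp [hddef]
    have hsymm : (z : Fin D → ℝ) ⬝ᵥ A *ᵥ d = (A *ᵥ z) ⬝ᵥ d := by
      rw [dotProduct_mulVec, ← Matrix.mulVec_transpose, hA.eq]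
    have hq : y ⬝ᵥ A.mulVec y =
        z ⬝ᵥ A.mulVec z + 2 * ((A *ᵥ z) ⬝ᵥ d) + d ⬝ᵥ A *ᵥ d := by
      have hyd : (y : Fin D → ℝ) = (show Fin D → ℝ from z) + d := by
        funext i; simp [hddef]
      show (y : Fin D → ℝ) ⬝ᵥ A *ᵥ (y : Fin D → ℝ) = _
      rw [hyd, Matrix.mulVec_add, dotProduct_add, add_dotProduct, add_dotProduct,
        hsymm, dotProduct_comm d (A *ᵥ z)]
      ring
    have hb : b ⬝ᵥ (y : Fin D → ℝ) = b ⬝ᵥ (z : Fin D → ℝ) + b ⬝ᵥ d := by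
      have hyd : (y : Fin D → ℝ) = (show Fin D → ℝ from z) + d := by
        funext i; simp [hddef]
      rw [hyd, dotProduct_add]
    have hn : ‖y - v‖^2 = ‖z - v‖^2 + 2 * (∑ i, (z i - v i) * d i) + ∑ i, d i ^ 2 := by
      rw [norm_sq_eq', norm_sq_eq', Finset.mul_sum, ← Finset.sum_add_distrib,
        ← Finset.sum_add_distrib]
      refine Finset.sum_congr rfl fun i _ => ?_
      have : (y - v) i = y i - v i := by simp
      rw [this]
      have : (z - v) i = z i - v i := by simp
      rw [this]
      have : y i = z i + d i := by simp [hddef]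
      rw [this]; ring
    have hgd : ∑ i, g i * d i =
        (A *ᵥ z) ⬝ᵥ d - b ⬝ᵥ d + μ * ∑ i, (z i - v i) * d i := by
      simp only [hgdef, dotProduct, Finset.mul_sum, ← Finset.sum_sub_distrib,
        ← Finset.sum_add_distrib]
      refine Finset.sum_congr rfl fun i _ => ?_
      ring
    rw [hq, hb, hn, hgd]
    ring
  have hpsd : ∀ d : Fin D → ℝ, 0 ≤ d ⬝ᵥ A *ᵥ d := fun d => by simpa using hApsd.dotProduct_mulVec_nonneg d
  refine ⟨hxz, hbox, ?_, ?_⟩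
  · intro y hy
    rw [hexp y]
    have h1 : 0 ≤ ∑ i, g i * (y i - z i) := Finset.sum_nonneg fun i _ => hg y hy i
    have h2 := hpsd (fun i => y i - z i)
    have h3 : (0:ℝ) ≤ ∑ i, (y i - z i)^2 := Finset.sum_nonneg fun i _ => sq_nonneg _
    nlinarith
  · intro w hw hwmin
    have hle := hwmin z hbox
    rw [hexp w] at hle
    have h1 : 0 ≤ ∑ i, g i * (w i - z i) := Finset.sum_nonneg fun i _ => hg w hw i
    have h2 := hpsd (fun i => w i - z i)
    have h3 : (∑ i, (w i - z i)^2) ≤ 0 := by nlinarith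
    have h4 : ∀ i ∈ Finset.univ, (w i - z i)^2 = 0 := by
      rw [← Finset.sum_eq_zero_iff_of_nonneg fun i _ => sq_nonneg (w i - z i)]
      exact le_antisymm h3 (Finset.sum_nonneg fun i _ => sq_nonneg _)
    ext i
    have := h4 i (Finset.mem_univ i)
    have := pow_eq_zero_iff (n := 2) (by norm_num) |>.mp this
    linarith [sub_eq_zero.mp this, this]
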